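/- (Leading asymptotics of the retarded solution.) Fix u ∈ ℝ and a unit vector n̂ ∈ ℝ³, and set x_r = (u + r, r n̂). Then lim_{r→∞} r · γ*^{ij}(x_r) = 4 𝒯^{ij}(u) for every i, j; that is, the retarded potential satisfies γ*^{ij} = (4/r) 𝒯^{ij} + o(1/r) along outgoing null rays, where 𝒯^{ij}(u) = ∫_{ℝ³} T^{ij}(u + n̂·𝐲, 𝐲) d³𝐲 is the retarded monopole moment over the null hyperplane {y : y⁰ = u + n̂·𝐲}. -/

import Mathlib

open scoped BigOperators

noncomputable section

/-- The Minkowski metric η = diag(−1,1,1,1) on ℝ⁴. -/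
def eta (i j : Fin 4) : ℝ := if i = j then (if i = 0 then -1 else 1) else 0

/-- Minkowski inner product a·b = η_{ij} a^i b^j. -/
def mdot (a b : Fin 4 → ℝ) : ℝ := ∑ i, ∑ j, eta i j * a i * b j

/-- Lowering an index with η : k_i = η_{ij} k^j. -/
def lo (a : Fin 4 → ℝ) (i : Fin 4) : ℝ := ∑ j, eta i j * a j

open MeasureTheory

/-- The point of the null hyperplane `P_u = {y : y⁰ = u + n̂·𝐲}` over the
spatial point `𝐲`. -/
def nullPt (n : EuclideanSpace ℝ (Fin 3)) (u : ℝ) (y : EuclideanSpace ℝ (Fin 3)) :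
    Fin 4 → ℝ :=
  ![u + ∑ α, n α * y α, y 0, y 1, y 2]

/-- The null vector `k = (1, n̂)`. -/
def kvec (n : EuclideanSpace ℝ (Fin 3)) : Fin 4 → ℝ := ![1, n 0, n 1, n 2]

/-- The retarded monopole moment `𝒯^{ij}(u) = ∫_{P_u} T^{ij}`. -/
def monopole (T : Fin 4 → Fin 4 → (Fin 4 → ℝ) → ℝ)
    (n : EuclideanSpace ℝ (Fin 3)) (i j : Fin 4) (u : ℝ) : ℝ :=
  ∫ y : EuclideanSpace ℝ (Fin 3), T i j (nullPt n u y)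

/-- The spatial part `𝐱` of `x = (x⁰,𝐱) ∈ ℝ⁴`, as a point of Euclidean 3-space. -/
def spat (x : Fin 4 → ℝ) : EuclideanSpace ℝ (Fin 3) := WithLp.toLp 2 (fun α => x α.succ)

/-- The retarded potential
`γ*^{ij}(x) = 4 ∫ T^{ij}(x⁰ − |𝐱 − 𝐲|, 𝐲)/|𝐱 − 𝐲| d³𝐲`. -/
def retPot (T : Fin 4 → Fin 4 → (Fin 4 → ℝ) → ℝ) (i j : Fin 4)
    (x : Fin 4 → ℝ) : ℝ :=
  4 * ∫ y : EuclideanSpace ℝ (Fin 3),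
        T i j ![x 0 - ‖spat x - y‖, y 0, y 1, y 2] / ‖spat x - y‖

open Filter RealInnerProductSpace

lemma aux_ratio (n y : EuclideanSpace ℝ (Fin 3)) (hn : ‖n‖ = 1) :
    Tendsto (fun ρ : ℝ => ‖ρ • n - y‖ / ρ) atTop (nhds 1) := by
  have hlow : Tendsto (fun ρ : ℝ => (ρ - ‖y‖) / ρ) atTop (nhds 1) := by
    have : Tendsto (fun ρ : ℝ => 1 - ‖y‖ / ρ) atTop (nhds 1) := by
      simpa using tendsto_const_nhds.sub (tendsto_const_nhds.div_atTop (f := fun _ : ℝ => ‖y‖) tendsto_id)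
    refine this.congr' ?_
    filter_upwards [eventually_gt_atTop 0] with ρ hρ
    field_simp
  have hhigh : Tendsto (fun ρ : ℝ => (ρ + ‖y‖) / ρ) atTop (nhds 1) := by
    have : Tendsto (fun ρ : ℝ => 1 + ‖y‖ / ρ) atTop (nhds 1) := by
      simpa using tendsto_const_nhds.add (tendsto_const_nhds.div_atTop (f := fun _ : ℝ => ‖y‖) tendsto_id)
    refine this.congr' ?_
    filter_upwards [eventually_gt_atTop 0] with ρ hρ
    field_simp
  refine tendsto_of_tendsto_of_tendsto_of_le_of_le' hlow hhigh ?_ ?_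
  · filter_upwards [eventually_gt_atTop 0] with ρ hρ
    have h1 : ρ - ‖y‖ ≤ ‖ρ • n - y‖ := by
      have := norm_sub_norm_le (ρ • n) y
      rw [norm_smul, hn] at this
      simp only [Real.norm_eq_abs, mul_one] at this
      linarith [le_abs_self ρ]
    gcongr
  · filter_upwards [eventually_gt_atTop 0] with ρ hρ
    have h1 : ‖ρ • n - y‖ ≤ ρ + ‖y‖ := by
      have := norm_sub_le (ρ • n) y
      rw [norm_smul, hn] at this
      simp only [Real.norm_eq_abs, mul_one] at this
      have : ‖ρ • n - y‖ ≤ |ρ| + ‖y‖ := this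
      rw [abs_of_pos hρ] at this
      exact this
    gcongr

lemma aux_sub (n y : EuclideanSpace ℝ (Fin 3)) (hn : ‖n‖ = 1) :
    Tendsto (fun ρ : ℝ => ρ - ‖ρ • n - y‖) atTop (nhds (∑ α, n α * y α)) := by
  set s : ℝ := ∑ α, n α * y α with hs
  have hinner : ⟪n, y⟫ = s := by simp [PiLp.inner_apply, RCLike.inner_apply, hs]; exact Finset.sum_congr rfl fun _ _ => mul_comm _ _
  have hmain : Tendsto (fun ρ : ℝ => (2 * s - ‖y‖ ^ 2 / ρ) / (1 + ‖ρ • n - y‖ / ρ))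
      atTop (nhds s) := by
    have hnum : Tendsto (fun ρ : ℝ => 2 * s - ‖y‖ ^ 2 / ρ) atTop (nhds (2 * s)) := by
      simpa using tendsto_const_nhds.sub
        (tendsto_const_nhds.div_atTop (f := fun _ : ℝ => ‖y‖ ^ 2) tendsto_id)
    have hden : Tendsto (fun ρ : ℝ => 1 + ‖ρ • n - y‖ / ρ) atTop (nhds 2) := by
      have h := (tendsto_const_nhds (x := (1:ℝ))).add (aux_ratio n y hn)
      norm_num at h
      exact h
    have := hnum.div hden (by norm_num)
    norm_num at this
    exact this
  refine hmain.congr' ?_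
  filter_upwards [eventually_gt_atTop (max ‖y‖ 0)] with ρ hρ
  have hρ0 : 0 < ρ := lt_of_le_of_lt (le_max_right _ _) hρ
  have hd : ρ - ‖y‖ ≤ ‖ρ • n - y‖ := by
    have := norm_sub_norm_le (ρ • n) y
    rw [norm_smul, hn] at this
    simp only [Real.norm_eq_abs, mul_one] at this
    linarith [le_abs_self ρ]
  have hdpos : 0 < ‖ρ • n - y‖ :=
    lt_of_lt_of_le (by linarith [lt_of_le_of_lt (le_max_left ‖y‖ 0) hρ]) hd
  have hd2 : ‖ρ • n - y‖ ^ 2 = ρ ^ 2 - 2 * ρ * s + ‖y‖ ^ 2 := by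
    rw [norm_sub_sq_real, real_inner_smul_left, hinner, norm_smul, hn]
    simp [abs_of_pos hρ0]
    ring
  have hden0 : (1 : ℝ) + ‖ρ • n - y‖ / ρ ≠ 0 := by positivity
  rw [eq_comm, eq_div_iff hden0]
  field_simp
  nlinarith [hd2]

lemma norm_sq_eq3 (y : EuclideanSpace ℝ (Fin 3)) :
    ‖y‖ ^ 2 = (y 0) ^ 2 + (y 1) ^ 2 + (y 2) ^ 2 := by
  rw [EuclideanSpace.norm_eq, Real.sq_sqrt (by positivity)]
  simp [Fin.sum_univ_three, sq_abs]

/-- Leading asymptotics of the retarded solution along outgoing null rays: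
`r · γ*^{ij} → 4 𝒯^{ij}(u)` as `r → ∞` with `x_r = (u + r, r n̂)`. -/
theorem retarded_potential_leading_asymptotics
    (T : Fin 4 → Fin 4 → (Fin 4 → ℝ) → ℝ)
    (hTsmooth : ∀ i j, ContDiff ℝ (⊤ : ℕ∞) (T i j))
    (hTsymm : ∀ i j y, T i j y = T j i y)
    (C : ℝ) (hTbdd : ∀ i j y, |T i j y| ≤ C)
    (R : ℝ) (hR : 0 < R)
    (hsupp : ∀ i j (y : Fin 4 → ℝ),
      R ^ 2 ≤ (y 1) ^ 2 + (y 2) ^ 2 + (y 3) ^ 2 → T i j y = 0)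
    (n : EuclideanSpace ℝ (Fin 3)) (hn : ‖n‖ = 1) (u : ℝ) :
    ∀ i j : Fin 4,
      Filter.Tendsto
        (fun ρ : ℝ => ρ * retPot T i j ![u + ρ, ρ * n 0, ρ * n 1, ρ * n 2])
        Filter.atTop (nhds (4 * monopole T n i j u)) := by
  intro i j
  have hC : 0 ≤ C := le_trans (abs_nonneg _) (hTbdd i j fun _ => 0)
  set F : ℝ → EuclideanSpace ℝ (Fin 3) → ℝ :=
    fun ρ y => ρ * (T i j ![u + ρ - ‖ρ • n - y‖, y 0, y 1, y 2] / ‖ρ • n - y‖) with hF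
  have hspat : ∀ ρ : ℝ, spat ![u + ρ, ρ * n 0, ρ * n 1, ρ * n 2] = ρ • n := by
    intro ρ
    ext α
    fin_cases α <;>
      simp [spat, PiLp.smul_apply, smul_eq_mul, Matrix.cons_val_one, Matrix.head_cons]
  have hre : ∀ ρ : ℝ, ρ * retPot T i j ![u + ρ, ρ * n 0, ρ * n 1, ρ * n 2]
      = 4 * ∫ y, F ρ y := by
    intro ρ
    rw [retPot, hspat]
    rw [show (![u + ρ, ρ * n 0, ρ * n 1, ρ * n 2] : Fin 4 → ℝ) 0 = u + ρ from rfl]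
    rw [hF]
    rw [integral_const_mul]
    ring
  have hlow : ∀ (ρ : ℝ) (y : EuclideanSpace ℝ (Fin 3)),
      0 < ρ → ρ - ‖y‖ ≤ ‖ρ • n - y‖ := by
    intro ρ y hρ
    have := norm_sub_norm_le (ρ • n) y
    rw [norm_smul, hn] at this
    simp only [Real.norm_eq_abs, mul_one] at this
    linarith [le_abs_self ρ]
  have hmono : Tendsto (fun ρ => ∫ y, F ρ y) atTop (nhds (monopole T n i j u)) := by
    rw [monopole]
    have hbnd_int : Integrable
        ((Metric.closedBall (0 : EuclideanSpace ℝ (Fin 3)) R).indicator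
          (fun _ => 2 * C)) := by
      exact (IntegrableOn.integrable_indicator
        (integrableOn_const measure_closedBall_lt_top.ne)
        measurableSet_closedBall)
    refine tendsto_integral_filter_of_dominated_convergence _ ?_ ?_ hbnd_int ?_
    · filter_upwards with ρ
      have hc : Continuous fun y : EuclideanSpace ℝ (Fin 3) =>
          (![u + ρ - ‖ρ • n - y‖, y 0, y 1, y 2] : Fin 4 → ℝ) := by
        refine continuous_pi fun k => ?_
        fin_cases k <;> simp <;> fun_prop
      exact ((measurable_const.mul
        ((((hTsmooth i j).continuous.comp hc).measurable).div
          ((continuous_const.sub continuous_id).norm.measurable)))).aestronglyMeasurable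
    · filter_upwards [eventually_ge_atTop (2 * R)] with ρ hρ
      refine ae_of_all _ fun y => ?_
      by_cases hy : ‖y‖ ≤ R
      · have hmem : y ∈ Metric.closedBall (0 : EuclideanSpace ℝ (Fin 3)) R := by
          simpa [Metric.mem_closedBall, dist_zero_right] using hy
        rw [Set.indicator_of_mem hmem]
        have hρ0 : 0 < ρ := by linarith
        have hd : ρ / 2 ≤ ‖ρ • n - y‖ := by
          have := hlow ρ y hρ0
          linarith
        have hdpos : 0 < ‖ρ • n - y‖ := lt_of_lt_of_le (by linarith) hd
        have hTb := hTbdd i j ![u + ρ - ‖ρ • n - y‖, y 0, y 1, y 2]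
        rw [hF, Real.norm_eq_abs, abs_mul, abs_div, abs_of_pos hρ0, abs_of_pos hdpos]
        rw [show ρ * (|T i j ![u + ρ - ‖ρ • n - y‖, y 0, y 1, y 2]| / ‖ρ • n - y‖)
            = ρ * |T i j ![u + ρ - ‖ρ • n - y‖, y 0, y 1, y 2]| / ‖ρ • n - y‖ by ring]
        rw [div_le_iff₀ hdpos]
        nlinarith [abs_nonneg (T i j ![u + ρ - ‖ρ • n - y‖, y 0, y 1, y 2])]
      · push_neg at hy
        have hz : T i j ![u + ρ - ‖ρ • n - y‖, y 0, y 1, y 2] = 0 := by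
          apply hsupp
          have hy2 : R ^ 2 ≤ ‖y‖ ^ 2 := by nlinarith [norm_nonneg y]
          rw [norm_sq_eq3] at hy2
          simpa using hy2
        have h0 : ‖F ρ y‖ = 0 := by simp [hF, hz]
        rw [h0]
        exact Set.indicator_nonneg (fun _ _ => by positivity) y
    · refine ae_of_all _ fun y => ?_
      have h0 : Tendsto (fun ρ : ℝ => u + ρ - ‖ρ • n - y‖) atTop
          (nhds (u + ∑ α, n α * y α)) := by
        have h := (tendsto_const_nhds (x := u)).add (aux_sub n y hn)
        exact h.congr fun ρ => by ring
      have hvec : Tendsto (fun ρ : ℝ => (![u + ρ - ‖ρ • n - y‖, y 0, y 1, y 2] : Fin 4 → ℝ))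
          atTop (nhds (nullPt n u y)) := by
        rw [tendsto_pi_nhds]
        intro k
        fin_cases k <;> simp [nullPt]
        · exact h0
      have hT : Tendsto (fun ρ : ℝ => T i j ![u + ρ - ‖ρ • n - y‖, y 0, y 1, y 2]) atTop
          (nhds (T i j (nullPt n u y))) := ((hTsmooth i j).continuous.tendsto _).comp hvec
      have hratio : Tendsto (fun ρ : ℝ => ρ / ‖ρ • n - y‖) atTop (nhds 1) := by
        have h := (aux_ratio n y hn).inv₀ one_ne_zero
        norm_num at h
        exact h
      have h := hratio.mul hT
      rw [one_mul] at h
      exact h.congr fun ρ => by rw [hF]; ring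
  exact (hmono.const_mul 4).congr fun ρ => (hre ρ).symm
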